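/- The free unital associative algebra U = T(x_1, x_2, …) on countably many generators is generic: for all l, k_1,…,k_n ≥ 0, the linear map ω_U from the free abelian group spanned by (l; k_1,…,k_n)-trees to the group of multilinear operations C^{k_1}(U;U) ⊗ … ⊗ C^{k_n}(U;U) → C^l(U;U), sending a tree T to the operation O_T, is injective (hence an isomorphism onto its image). -/

import Mathlib

/-- A planar rooted tree with legs labeled by natural numbers, `white`
vertices labeled by natural numbers, `black` vertices, and `special`
(arity 0) vertices.  The children lists record the planar structure. -/
inductive RTree : Type
  | leg : ℕ → RTree
  | special : RTree
  | white : ℕ → List RTree → RTree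
  | black : List RTree → RTree

mutual
  /-- Number of occurrences of the white label `i`. -/
  def whiteCount (i : ℕ) : RTree → ℕ
    | .leg _ => 0
    | .special => 0
    | .white j ts => (if j = i then 1 else 0) + whiteCountL i ts
    | .black ts => whiteCountL i ts
  def whiteCountL (i : ℕ) : List RTree → ℕ
    | [] => 0
    | t :: ts => whiteCount i t + whiteCountL i ts
end

mutual
  /-- Number of occurrences of the leg label `j`. -/
  def legCount (j : ℕ) : RTree → ℕ
    | .leg j' => if j' = j then 1 else 0
    | .special => 0
    | .white _ ts => legCountL j ts
    | .black ts => legCountL j ts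
  def legCountL (j : ℕ) : List RTree → ℕ
    | [] => 0
    | t :: ts => legCount j t + legCountL j ts
end

/-- A tree whose root is neither a black vertex nor a special vertex. -/
def RTree.notBlackOrSpecial : RTree → Prop
  | .black _ => False
  | .special => False
  | _ => True

mutual
  /-- Local well-formedness: white vertices have label `< n` and the arity
  prescribed by `k`; black vertices have arity `≥ 2` and no child which is a
  black or a special vertex (no edge connects two black vertices or a black
  vertex with a special vertex). -/
  def IsWF (n : ℕ) (k : ℕ → ℕ) : RTree → Prop
    | .leg _ => True
    | .special => True
    | .white j ts => j < n ∧ ts.length = k j ∧ IsWFL n k ts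
    | .black ts => 2 ≤ ts.length ∧ (∀ t ∈ ts, t.notBlackOrSpecial) ∧ IsWFL n k ts
  def IsWFL (n : ℕ) (k : ℕ → ℕ) : List RTree → Prop
    | [] => True
    | t :: ts => IsWF n k t ∧ IsWFL n k ts
end

/-- An `(l; k 0, …, k (n-1))`-tree: a well-formed planar tree whose white
vertices are labeled bijectively by `{0,…,n-1}` (with arities given by `k`)
and whose legs are labeled bijectively by `{0,…,l-1}`. -/
def IsTree (n l : ℕ) (k : ℕ → ℕ) (T : RTree) : Prop :=
  IsWF n k T
    ∧ (∀ i : ℕ, whiteCount i T = if i < n then 1 else 0)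
    ∧ (∀ j : ℕ, legCount j T = if j < l then 1 else 0)

mutual
  /-- Evaluation of the natural operation `O_T(f_1,…,f_n)(a_0,…,a_{l-1})`
  determined by a tree: the `i`-th white vertex is decorated by the Hochschild
  cochain `f i`, black vertices by the iterated multiplication, special
  vertices by the unit `1`, legs by the inputs `a`, and one composes along the
  tree. -/
  noncomputable def evalT (k : ℕ → ℕ)
      (f : ∀ i : ℕ, MultilinearMap ℤ (fun _ : Fin (k i) => FreeAlgebra ℤ ℕ) (FreeAlgebra ℤ ℕ))
      (a : ℕ → FreeAlgebra ℤ ℕ) : RTree → FreeAlgebra ℤ ℕ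
    | .leg j => a j
    | .special => 1
    | .white i ts => f i (fun s => (evalL k f a ts).getD s.val 1)
    | .black ts => (evalL k f a ts).prod
  noncomputable def evalL (k : ℕ → ℕ)
      (f : ∀ i : ℕ, MultilinearMap ℤ (fun _ : Fin (k i) => FreeAlgebra ℤ ℕ) (FreeAlgebra ℤ ℕ))
      (a : ℕ → FreeAlgebra ℤ ℕ) : List RTree → List (FreeAlgebra ℤ ℕ)
    | [] => []
    | t :: ts => evalT k f a t :: evalL k f a ts
end

mutual
  def wordT : RTree → List ℕ
    | .leg j => [2*j]
    | .special => []
    | .white i ts => (2*i+1) :: wordW i ts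
    | .black ts => wordB ts
  def wordW (i : ℕ) : List RTree → List ℕ
    | [] => []
    | t :: ts => wordT t ++ ((2*i+1) :: wordW i ts)
  def wordB : List RTree → List ℕ
    | [] => []
    | t :: ts => wordT t ++ wordB ts
end

mutual
  theorem notMem_T (i : ℕ) : ∀ T : RTree, whiteCount i T = 0 → (2*i+1) ∉ wordT T
    | .leg j, _ => by simp [wordT]; omega
    | .special, _ => by simp [wordT]
    | .white j ts, h => by
        have hj : j ≠ i ∧ whiteCountL i ts = 0 := by
          by_cases hji : j = i <;> simp [whiteCount, hji] at h ⊢ <;> omega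
        simp only [wordT, List.mem_cons]
        rintro (he | hm)
        · omega
        · exact notMem_W i j ts hj.2 hj.1 hm
    | .black ts, h => by
        simp only [whiteCount] at h
        simpa [wordT] using notMem_B i ts h
  theorem notMem_W (i j : ℕ) : ∀ ts : List RTree, whiteCountL i ts = 0 → j ≠ i →
      (2*i+1) ∉ wordW j ts
    | [], _, _ => by simp [wordW]
    | t :: ts, h, hji => by
        have h1 : whiteCount i t = 0 ∧ whiteCountL i ts = 0 := by
          simp [whiteCountL] at h; omega
        simp only [wordW, List.mem_append, List.mem_cons]
        rintro (hm | (he | hm))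
        · exact notMem_T i t h1.1 hm
        · omega
        · exact notMem_W i j ts h1.2 hji hm
  theorem notMem_B (i : ℕ) : ∀ ts : List RTree, whiteCountL i ts = 0 →
      (2*i+1) ∉ wordB ts
    | [], _ => by simp [wordB]
    | t :: ts, h => by
        have h1 : whiteCount i t = 0 ∧ whiteCountL i ts = 0 := by
          simp [whiteCountL] at h; omega
        simp only [wordB, List.mem_append]
        rintro (hm | hm)
        · exact notMem_T i t h1.1 hm
        · exact notMem_B i ts h1.2 hm
end

theorem lastW (i : ℕ) : ∀ ts : List RTree, ∃ p, (2*i+1) :: wordW i ts = p ++ [2*i+1]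
  | [] => ⟨[], by simp [wordW]⟩
  | t :: ts => by
      obtain ⟨p, hp⟩ := lastW i ts
      exact ⟨(2*i+1) :: wordT t ++ p, by simp [wordW, hp]⟩

theorem word_ne_nil : ∀ t : RTree, t.notBlackOrSpecial → wordT t ≠ []
  | .leg j, _ => by simp [wordT]
  | .white i ts, _ => by simp [wordT]

theorem splitFirst {α} {y : α} : ∀ (p : List α) (q A B : List α),
    p ++ y :: A = q ++ y :: B → y ∉ p → y ∉ q → p = q ∧ A = B
  | [], [], A, B, h, _, _ => ⟨rfl, by simpa using h⟩
  | [], c :: q', A, B, h, _, hq => by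
      simp only [List.nil_append, List.cons_append, List.cons.injEq] at h
      exact absurd (h.1 ▸ (List.mem_cons_self (a := c) (l := q'))) hq
  | c :: p', [], A, B, h, hp, _ => by
      simp only [List.nil_append, List.cons_append, List.cons.injEq] at h
      exact absurd (h.1 ▸ (List.mem_cons_self (a := c) (l := p'))) hp
  | c :: p', d :: q', A, B, h, hp, hq => by
      simp only [List.cons_append, List.cons.injEq] at h
      obtain ⟨h1, h2⟩ := splitFirst p' q' A B h.2 (fun hm => hp (List.mem_cons_of_mem _ hm))
        (fun hm => hq (List.mem_cons_of_mem _ hm))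
      exact ⟨by rw [h.1, h1], h2⟩

theorem splitLast {α} {y : α} : ∀ (p : List α) (q A B : List α),
    p ++ y :: A = q ++ y :: B → y ∉ A → y ∉ B → p = q ∧ A = B
  | [], [], A, B, h, _, _ => ⟨rfl, by simpa using h⟩
  | [], c :: q', A, B, h, hA, _ => by
      simp only [List.nil_append, List.cons_append, List.cons.injEq] at h
      exact absurd (h.2 ▸ (by simp : y ∈ q' ++ y :: B)) hA
  | c :: p', [], A, B, h, _, hB => by
      simp only [List.nil_append, List.cons_append, List.cons.injEq] at h
      exact absurd (h.2.symm ▸ (by simp : y ∈ p' ++ y :: A)) hB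
  | c :: p', d :: q', A, B, h, hA, hB => by
      simp only [List.cons_append, List.cons.injEq] at h
      obtain ⟨h1, h2⟩ := splitLast p' q' A B h.2 hA hB
      exact ⟨by rw [h.1, h1], h2⟩

theorem wc_head_le (j : ℕ) (t : RTree) (ts : List RTree) :
    whiteCount j t ≤ whiteCountL j (t :: ts) := by simp only [whiteCountL]; omega

theorem wcl_le_of_white (i : ℕ) (ts : List RTree)
    (hu : ∀ j, whiteCount j (.white i ts) ≤ 1) : ∀ j, whiteCountL j ts ≤ 1 := by
  intro j
  have := hu j
  by_cases h : i = j <;> simp only [whiteCount, h, if_pos, if_neg, ite_true, ite_false] at this <;> omega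

theorem lenB : ∀ ts : List RTree, (∀ t ∈ ts, t.notBlackOrSpecial) →
    ts.length ≤ (wordB ts).length
  | [], _ => Nat.le_refl 0
  | t :: ts, h => by
      have h1 : wordT t ≠ [] := word_ne_nil t (h t (by simp))
      have h2 := lenB ts (fun u hu => h u (by simp [hu]))
      have h3 : 1 ≤ (wordT t).length := List.length_pos_iff.mpr h1
      simp only [wordB, List.length_append, List.length_cons]
      omega

mutual
theorem injT (n : ℕ) (k : ℕ → ℕ) : ∀ (T T' : RTree), IsWF n k T → IsWF n k T' →
    (∀ i, whiteCount i T ≤ 1) → (∀ i, whiteCount i T' ≤ 1) → wordT T = wordT T' → T = T'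
  | .leg j, .leg j', _, _, _, _, h => by
      simp only [wordT, List.cons.injEq] at h
      have : j = j' := by omega
      rw [this]
  | .leg j, .special, _, _, _, _, h => by simp [wordT] at h
  | .leg j, .white i' ts', _, _, _, _, h => by
      simp only [wordT, List.cons.injEq] at h
      omega
  | .leg j, .black ts', _, hwf', _, _, h => by
      obtain ⟨hlen, hnb, _⟩ := hwf'
      have h1 := lenB ts' hnb
      have hl := congrArg List.length h
      simp only [wordT, List.length_cons, List.length_nil] at hl
      omega
  | .special, .leg j', _, _, _, _, h => by simp [wordT] at h
  | .special, .special, _, _, _, _, _ => rfl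
  | .special, .white i' ts', _, _, _, _, h => by simp [wordT] at h
  | .special, .black ts', _, hwf', _, _, h => by
      obtain ⟨hlen, hnb, _⟩ := hwf'
      have h1 := lenB ts' hnb
      have hl := congrArg List.length h
      simp only [wordT, List.length_nil] at hl
      omega
  | .white i ts, .leg j', _, _, _, _, h => by
      simp only [wordT, List.cons.injEq] at h
      omega
  | .white i ts, .special, _, _, _, _, h => by simp [wordT] at h
  | .white i ts, .white i' ts', hwf, hwf', hu, hu', h => by
      simp only [wordT, List.cons.injEq] at h
      obtain ⟨hi, hw⟩ := h
      have hii : i = i' := by omega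
      subst hii
      obtain ⟨-, -, hwfl⟩ := hwf
      obtain ⟨-, -, hwfl'⟩ := hwf'
      have hz : whiteCountL i ts = 0 := by
        have := hu i
        simp only [whiteCount, if_pos rfl, if_true] at this
        omega
      have hz' : whiteCountL i ts' = 0 := by
        have := hu' i
        simp only [whiteCount, if_pos rfl, if_true] at this
        omega
      have := injW n k i ts ts' hwfl hwfl' (wcl_le_of_white i ts hu)
        (wcl_le_of_white i ts' hu') hz hz' hw
      rw [this]
  | .white i ts, .black ts', hwf, hwf', hu, hu', h => by
      obtain ⟨hlen, hnb, hwfl'⟩ := hwf'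
      rcases ts' with - | ⟨t1, - | ⟨t2, rest⟩⟩
      · simp at hlen
      · simp at hlen
      · have h0 : (2*i+1) :: wordW i ts = wordT t1 ++ (wordT t2 ++ wordB rest) := by
          simpa only [wordT, wordB, List.append_assoc] using h
        rcases t1 with j1 | - | ⟨i1, cs⟩ | cs
        · rw [wordT] at h0
          simp only [List.cons_append, List.nil_append, List.cons.injEq] at h0
          omega
        · simpa [RTree.notBlackOrSpecial] using hnb _ List.mem_cons_self
        · have h1 := h0
          rw [wordT] at h1
          simp only [List.cons_append, List.cons.injEq] at h1
          have hi : i = i1 := by omega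
          subst hi
          have hq := hu' i
          simp only [whiteCount, whiteCountL, if_pos rfl, if_true] at hq
          have hz2 : whiteCount i t2 = 0 := by omega
          have hzr : whiteCountL i rest = 0 := by omega
          have hnm : (2*i+1) ∉ wordT t2 ++ wordB rest := by
            simp only [List.mem_append]
            rintro (hm | hm)
            · exact notMem_T i t2 hz2 hm
            · exact notMem_B i rest hzr hm
          obtain ⟨p, hp⟩ := lastW i ts
          obtain ⟨p1, hp1⟩ := lastW i cs
          rw [hp, wordT, hp1, List.append_assoc] at h0
          have heq : p ++ (2*i+1) :: ([] : List ℕ) = p1 ++ (2*i+1) :: (wordT t2 ++ wordB rest) := h0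
          obtain ⟨-, h2⟩ := splitLast p p1 _ _ heq (by simp) hnm
          have h3 : wordT t2 ≠ [] := word_ne_nil t2 (hnb t2 (by simp))
          exact absurd (List.append_eq_nil_iff.mp h2.symm).1 h3
        · simpa [RTree.notBlackOrSpecial] using hnb _ List.mem_cons_self
  | .black ts, .leg j', hwf, _, _, _, h => by
      obtain ⟨hlen, hnb, _⟩ := hwf
      have h1 := lenB ts hnb
      have hl := congrArg List.length h
      simp only [wordT, List.length_cons, List.length_nil] at hl
      omega
  | .black ts, .special, hwf, _, _, _, h => by
      obtain ⟨hlen, hnb, _⟩ := hwf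
      have h1 := lenB ts hnb
      have hl := congrArg List.length h
      simp only [wordT, List.length_nil] at hl
      omega
  | .black ts, .white i' ts', hwf, hwf', hu, hu', h => by
      obtain ⟨hlen, hnb, hwfl⟩ := hwf
      rcases ts with - | ⟨t1, - | ⟨t2, rest⟩⟩
      · simp at hlen
      · simp at hlen
      · have h0 : wordT t1 ++ (wordT t2 ++ wordB rest) = (2*i'+1) :: wordW i' ts' := by
          simpa only [wordT, wordB, List.append_assoc] using h
        rcases t1 with j1 | - | ⟨i1, cs⟩ | cs
        · rw [wordT] at h0
          simp only [List.cons_append, List.nil_append, List.cons.injEq] at h0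
          omega
        · simpa [RTree.notBlackOrSpecial] using hnb _ List.mem_cons_self
        · have h1 := h0
          rw [wordT] at h1
          simp only [List.cons_append, List.cons.injEq] at h1
          have hi : i' = i1 := by omega
          subst hi
          have hq := hu i'
          simp only [whiteCount, whiteCountL, if_pos rfl, if_true] at hq
          have hz2 : whiteCount i' t2 = 0 := by omega
          have hzr : whiteCountL i' rest = 0 := by omega
          have hnm : (2*i'+1) ∉ wordT t2 ++ wordB rest := by
            simp only [List.mem_append]
            rintro (hm | hm)
            · exact notMem_T i' t2 hz2 hm
            · exact notMem_B i' rest hzr hm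
          obtain ⟨p, hp⟩ := lastW i' ts'
          obtain ⟨p1, hp1⟩ := lastW i' cs
          rw [hp, wordT, hp1, List.append_assoc] at h0
          have heq : p1 ++ (2*i'+1) :: (wordT t2 ++ wordB rest) = p ++ (2*i'+1) :: ([] : List ℕ) := h0
          obtain ⟨-, h2⟩ := splitLast p1 p _ _ heq hnm (by simp)
          have h3 : wordT t2 ≠ [] := word_ne_nil t2 (hnb t2 (by simp))
          exact absurd (List.append_eq_nil_iff.mp h2).1 h3
        · simpa [RTree.notBlackOrSpecial] using hnb _ List.mem_cons_self
  | .black ts, .black ts', hwf, hwf', hu, hu', h => by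
      obtain ⟨-, hnb, hwfl⟩ := hwf
      obtain ⟨-, hnb', hwfl'⟩ := hwf'
      have hu2 : ∀ j, whiteCountL j ts ≤ 1 := fun j => by
        have := hu j; simpa only [whiteCount] using this
      have hu2' : ∀ j, whiteCountL j ts' ≤ 1 := fun j => by
        have := hu' j; simpa only [whiteCount] using this
      have := injB n k ts ts' hwfl hwfl' hnb hnb' hu2 hu2' h
      rw [this]

theorem injW (n : ℕ) (k : ℕ → ℕ) (i : ℕ) : ∀ (ts ts' : List RTree),
    IsWFL n k ts → IsWFL n k ts' →
    (∀ j, whiteCountL j ts ≤ 1) → (∀ j, whiteCountL j ts' ≤ 1) →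
    whiteCountL i ts = 0 → whiteCountL i ts' = 0 →
    wordW i ts = wordW i ts' → ts = ts'
  | [], [], _, _, _, _, _, _, _ => rfl
  | [], t' :: ts', _, _, _, _, _, _, h => by
      have hl := congrArg List.length h
      simp only [wordW, List.length_nil, List.length_append, List.length_cons] at hl
      omega
  | t :: ts, [], _, _, _, _, _, _, h => by
      have hl := congrArg List.length h
      simp only [wordW, List.length_nil, List.length_append, List.length_cons] at hl
      omega
  | t :: ts, t' :: ts', hwfl, hwfl', hu, hu', hz, hz', h => by
      simp only [wordW] at h
      have hzt : whiteCount i t = 0 ∧ whiteCountL i ts = 0 := by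
        simp only [whiteCountL] at hz; omega
      have hzt' : whiteCount i t' = 0 ∧ whiteCountL i ts' = 0 := by
        simp only [whiteCountL] at hz'; omega
      obtain ⟨h1, h2⟩ := splitFirst _ _ _ _ h (notMem_T i t hzt.1) (notMem_T i t' hzt'.1)
      have et : t = t' := injT n k t t' hwfl.1 hwfl'.1
        (fun j => le_trans (wc_head_le j t ts) (hu j))
        (fun j => le_trans (wc_head_le j t' ts') (hu' j)) h1
      have ets : ts = ts' := injW n k i ts ts' hwfl.2 hwfl'.2
        (fun j => by have := hu j; simp only [whiteCountL] at this; omega)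
        (fun j => by have := hu' j; simp only [whiteCountL] at this; omega)
        hzt.2 hzt'.2 h2
      rw [et, ets]

theorem injB (n : ℕ) (k : ℕ → ℕ) : ∀ (ts ts' : List RTree),
    IsWFL n k ts → IsWFL n k ts' →
    (∀ t ∈ ts, t.notBlackOrSpecial) → (∀ t ∈ ts', t.notBlackOrSpecial) →
    (∀ j, whiteCountL j ts ≤ 1) → (∀ j, whiteCountL j ts' ≤ 1) →
    wordB ts = wordB ts' → ts = ts'
  | [], [], _, _, _, _, _, _, _ => rfl
  | [], t' :: ts', _, _, _, hnb', _, _, h => by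
      have h1 : wordT t' ≠ [] := word_ne_nil t' (hnb' t' (by simp))
      simp only [wordB] at h
      exact absurd (List.append_eq_nil_iff.mp h.symm).1 h1
  | t :: ts, [], _, _, hnb, _, _, _, h => by
      have h1 : wordT t ≠ [] := word_ne_nil t (hnb t (by simp))
      simp only [wordB] at h
      exact absurd (List.append_eq_nil_iff.mp h).1 h1
  | .special :: ts, _, _, _, hnb, _, _, _, _ => by
      simpa [RTree.notBlackOrSpecial] using hnb _ List.mem_cons_self
  | .black cs :: ts, _, _, _, hnb, _, _, _, _ => by
      simpa [RTree.notBlackOrSpecial] using hnb _ List.mem_cons_self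
  | _ :: _, .special :: ts', _, _, _, hnb', _, _, _ => by
      simpa [RTree.notBlackOrSpecial] using hnb' _ List.mem_cons_self
  | _ :: _, .black cs' :: ts', _, _, _, hnb', _, _, _ => by
      simpa [RTree.notBlackOrSpecial] using hnb' _ List.mem_cons_self
  | .leg j :: ts, .leg j' :: ts', hwfl, hwfl', hnb, hnb', hu, hu', h => by
      simp only [wordB, wordT, List.cons_append, List.nil_append, List.cons.injEq] at h
      have hj : j = j' := by omega
      subst hj
      have := injB n k ts ts' hwfl.2 hwfl'.2
        (fun u hu0 => hnb u (by simp [hu0])) (fun u hu0 => hnb' u (by simp [hu0]))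
        (fun j0 => by have := hu j0; simp only [whiteCountL] at this; omega)
        (fun j0 => by have := hu' j0; simp only [whiteCountL] at this; omega) h.2
      rw [this]
  | .leg j :: ts, .white i' cs' :: ts', _, _, _, _, _, _, h => by
      simp only [wordB, wordT, List.cons_append, List.nil_append, List.cons.injEq] at h
      omega
  | .white i cs :: ts, .leg j' :: ts', _, _, _, _, _, _, h => by
      simp only [wordB, wordT, List.cons_append, List.nil_append, List.cons.injEq] at h
      omega
  | .white i cs :: ts, .white i' cs' :: ts', hwfl, hwfl', hnb, hnb', hu, hu', h => by
      have h1 := h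
      simp only [wordB, wordT, List.cons_append, List.cons.injEq] at h1
      have hi : i = i' := by omega
      subst hi
      have hq := hu i
      have hq' := hu' i
      simp only [whiteCountL, whiteCount, if_pos rfl, if_true] at hq hq'
      have hzA : whiteCountL i ts = 0 := by omega
      have hzB : whiteCountL i ts' = 0 := by omega
      have hnmA : (2*i+1) ∉ wordB ts := notMem_B i ts hzA
      have hnmB : (2*i+1) ∉ wordB ts' := notMem_B i ts' hzB
      obtain ⟨p, hp⟩ := lastW i cs
      obtain ⟨p', hp'⟩ := lastW i cs'
      have h0 : wordT (.white i cs) ++ wordB ts = wordT (.white i cs') ++ wordB ts' := h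
      rw [wordT, wordT, hp, hp', List.append_assoc, List.append_assoc] at h0
      have heq : p ++ (2*i+1) :: wordB ts = p' ++ (2*i+1) :: wordB ts' := h0
      obtain ⟨hpe, h2⟩ := splitLast p p' _ _ heq hnmA hnmB
      have et : RTree.white i cs = RTree.white i cs' := injT n k _ _ hwfl.1 hwfl'.1
        (fun j => le_trans (wc_head_le j _ ts) (hu j))
        (fun j => le_trans (wc_head_le j _ ts') (hu' j))
        (by rw [wordT, wordT, hp, hp', hpe])
      have ets : ts = ts' := injB n k ts ts' hwfl.2 hwfl'.2
        (fun u hu0 => hnb u (by simp [hu0])) (fun u hu0 => hnb' u (by simp [hu0]))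
        (fun j0 => by have := hu j0; simp only [whiteCountL] at this; omega)
        (fun j0 => by have := hu' j0; simp only [whiteCountL] at this; omega) h2
      rw [et, ets]
end

noncomputable def mono (w : List ℕ) : FreeAlgebra ℤ ℕ := (w.map (FreeAlgebra.ι ℤ)).prod

theorem mono_nil : mono [] = 1 := by simp [mono]
theorem mono_cons (x : ℕ) (w : List ℕ) :
    mono (x :: w) = FreeAlgebra.ι ℤ x * mono w := by simp [mono]
theorem mono_append (w1 w2 : List ℕ) : mono (w1 ++ w2) = mono w1 * mono w2 := by
  simp [mono]

noncomputable def ff (k : ℕ → ℕ) (i : ℕ) :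
    MultilinearMap ℤ (fun _ : Fin (k i) => FreeAlgebra ℤ ℕ) (FreeAlgebra ℤ ℕ) :=
  (LinearMap.mulLeft ℤ (FreeAlgebra.ι ℤ (2*i+1))).compMultilinearMap
    ((MultilinearMap.mkPiAlgebraFin ℤ (k i) (FreeAlgebra ℤ ℕ)).compLinearMap
      (fun _ => LinearMap.mulRight ℤ (FreeAlgebra.ι ℤ (2*i+1))))

theorem ff_apply (k : ℕ → ℕ) (i : ℕ) (u : Fin (k i) → FreeAlgebra ℤ ℕ) :
    ff k i u = FreeAlgebra.ι ℤ (2*i+1) *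
      (List.ofFn (fun s => u s * FreeAlgebra.ι ℤ (2*i+1))).prod := by
  erw [ff, LinearMap.compMultilinearMap_apply, MultilinearMap.compLinearMap_apply, MultilinearMap.mkPiAlgebraFin_apply]
  rfl

def aa (j : ℕ) : FreeAlgebra ℤ ℕ := FreeAlgebra.ι ℤ (2*j)

theorem ofFn_getD {α β : Type*} (g : α → β) (d : α) :
    ∀ (m : ℕ) (l : List α), l.length = m →
      List.ofFn (fun s : Fin m => g (l.getD s.1 d)) = l.map g
  | 0, [], _ => by simp
  | m+1, x :: xs, h => by
      have ih := ofFn_getD g d m xs (by simpa using h)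
      simp only [List.ofFn_succ, Fin.val_succ, Fin.val_zero, List.getD_cons_zero,
        List.getD_cons_succ, List.map_cons]
      rw [ih]

theorem monoW (i : ℕ) : ∀ ts : List RTree,
    mono (wordW i ts) = (ts.map (fun t => mono (wordT t) * FreeAlgebra.ι ℤ (2*i+1))).prod
  | [] => by simp [wordW, mono]
  | t :: ts => by
      simp only [wordW, mono_append, mono_cons, List.map_cons, List.prod_cons,
        monoW i ts, mul_assoc]

theorem monoB : ∀ ts : List RTree,
    mono (wordB ts) = (ts.map (fun t => mono (wordT t))).prod
  | [] => by simp [wordB, mono]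
  | t :: ts => by
      simp only [wordB, mono_append, List.map_cons, List.prod_cons, monoB ts]

mutual
theorem evalT_eq (n : ℕ) (k : ℕ → ℕ) : ∀ T : RTree, IsWF n k T →
    evalT k (ff k) aa T = mono (wordT T)
  | .leg j, _ => by
      simp [evalT, wordT, aa, mono_cons, mono_nil]
  | .special, _ => by simp [evalT, wordT, mono_nil]
  | .white i ts, hwf => by
      obtain ⟨-, hlen, hwfl⟩ := hwf
      rw [evalT, ff_apply, evalL_eq n k ts hwfl]
      have hlen2 : (ts.map (fun t => mono (wordT t))).length = k i := by simp [hlen]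
      rw [ofFn_getD (fun z => z * FreeAlgebra.ι ℤ (2*i+1)) 1 (k i) _ hlen2, List.map_map,
        wordT, mono_cons, monoW]
      rfl
  | .black ts, hwf => by
      obtain ⟨-, -, hwfl⟩ := hwf
      rw [evalT, evalL_eq n k ts hwfl, wordT, monoB]
theorem evalL_eq (n : ℕ) (k : ℕ → ℕ) : ∀ ts : List RTree, IsWFL n k ts →
    evalL k (ff k) aa ts = ts.map (fun t => mono (wordT t))
  | [], _ => rfl
  | t :: ts, h => by
      rw [evalL, evalT_eq n k t h.1, evalL_eq n k ts h.2, List.map_cons]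
end

theorem e_mono : ∀ w : List ℕ,
    FreeAlgebra.equivMonoidAlgebraFreeMonoid (mono w)
      = MonoidAlgebra.single (FreeMonoid.ofList w) (1 : ℤ)
  | [] => by
      rw [mono_nil, map_one]
      rfl
  | x :: w => by
      rw [mono_cons, map_mul, e_mono w]
      have hι : FreeAlgebra.equivMonoidAlgebraFreeMonoid (FreeAlgebra.ι ℤ x)
          = MonoidAlgebra.single (FreeMonoid.of x) (1 : ℤ) := by
        rw [show (FreeAlgebra.equivMonoidAlgebraFreeMonoid (FreeAlgebra.ι ℤ x))
            = (FreeAlgebra.lift ℤ fun y => (MonoidAlgebra.of ℤ (FreeMonoid ℕ))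
              (FreeMonoid.of y)) (FreeAlgebra.ι ℤ x) from rfl,
          FreeAlgebra.lift_ι_apply]
        rfl
      rw [hι, MonoidAlgebra.single_mul_single, one_mul, ← FreeMonoid.ofList_cons]

/-!
STATEMENT 13: The free unital associative algebra `U = FreeAlgebra ℤ ℕ` on
countably many generators is *generic*: for all `l, k_1,…,k_n ≥ 0`, the
linear map `ω_U`, from the free abelian group spanned by `(l; k_1,…,k_n)`-trees
to natural multilinear operations
`C^{k_1}(U;U) ⊗ … ⊗ C^{k_n}(U;U) → C^l(U;U)`, sending a tree `T` to `O_T`,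
is injective: if a finite integral linear combination of the operations `O_T`
vanishes identically (on all cochains `f` and all inputs `a`), then all its
coefficients vanish.
-/
theorem free_algebra_is_generic (n l : ℕ) (k : ℕ → ℕ)
    (s : Finset RTree) (hs : ∀ T ∈ s, IsTree n l k T) (c : RTree → ℤ)
    (hvanish : ∀ (f : ∀ i : ℕ,
        MultilinearMap ℤ (fun _ : Fin (k i) => FreeAlgebra ℤ ℕ) (FreeAlgebra ℤ ℕ))
      (a : ℕ → FreeAlgebra ℤ ℕ),
        (∑ T ∈ s, c T • evalT k f a T) = 0) :
    ∀ T ∈ s, c T = 0 := by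
  classical
  intro T₀ hT₀
  have huniq : ∀ T ∈ s, ∀ i, whiteCount i T ≤ 1 := by
    intro T hT i
    rw [(hs T hT).2.1 i]
    split <;> omega
  have hsum : (∑ T ∈ s, c T • mono (wordT T)) = 0 := by
    rw [← hvanish (ff k) aa]
    exact Finset.sum_congr rfl fun T hT => by rw [evalT_eq n k T (hs T hT).1]
  have h2 : (∑ T ∈ s, c T •
      MonoidAlgebra.single (FreeMonoid.ofList (wordT T)) (1 : ℤ)) = 0 := by
    have h := congrArg (FreeAlgebra.equivMonoidAlgebraFreeMonoid (R := ℤ) (X := ℕ)) hsum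
    rw [map_sum, map_zero] at h
    rw [← h]
    exact Finset.sum_congr rfl fun T _ => by rw [map_zsmul, e_mono]
  have h2' : (∑ T ∈ s, c T • Finsupp.single (FreeMonoid.ofList (wordT T)) (1 : ℤ)
      : FreeMonoid ℕ →₀ ℤ) = 0 := by
    rw [← MonoidAlgebra.ofCoeff_eq_zero, MonoidAlgebra.ofCoeff_sum]; exact h2
  have h3 := DFunLike.congr_fun h2' (FreeMonoid.ofList (wordT T₀))
  rw [Finset.sum_apply', Finsupp.zero_apply] at h3
  simp only [Finsupp.smul_apply] at h3
  have h4 : ∀ T ∈ s, T ≠ T₀ →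
      c T • (Finsupp.single (FreeMonoid.ofList (wordT T)) (1 : ℤ))
        (FreeMonoid.ofList (wordT T₀)) = 0 := by
    intro T hT hne
    have hword : wordT T ≠ wordT T₀ := by
      intro hw
      exact hne (injT n k T T₀ (hs T hT).1 (hs T₀ hT₀).1 (huniq T hT) (huniq T₀ hT₀) hw)
    have : FreeMonoid.ofList (wordT T) ≠ FreeMonoid.ofList (wordT T₀) := by
      intro hw
      exact hword (FreeMonoid.ofList.injective hw)
    rw [Finsupp.single_apply, if_neg this, smul_zero]
  rw [Finset.sum_eq_single_of_mem T₀ hT₀ h4] at h3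
  rw [Finsupp.single_apply, if_pos rfl] at h3
  simpa using h3
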